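/- Let R(t) be a monic polynomial with integer coefficients all of whose complex roots have absolute value at most 1, let S(t) be a polynomial with integer coefficients, and for each integer n ≥ 1 set Q_n(t) = t^n R(t) + S(t). Then for every ε > 0 there exists an integer N such that for all n ≥ N, every complex root z of Q_n satisfies |z| ≤ 1 + ε. In particular, if for each sufficiently large n the polynomial Q_n has a real root μ_n > 1, then μ_n → 1 as n → ∞. -/

import Mathlib

open Polynomial Filter

private lemma pow_card_le_prod_abs (s : Multiset ℂ) (c : ℝ) (hc : 0 ≤ c)
    (h : ∀ x ∈ s, c ≤ ‖x‖) :
    c ^ Multiset.card s ≤ (s.map (fun x => ‖x‖)).prod := by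
  induction s using Multiset.induction with
  | empty => simp
  | cons a s ih =>
    simp only [Multiset.map_cons, Multiset.prod_cons, Multiset.card_cons, pow_succ]
    rw [mul_comm]
    exact mul_le_mul (h a (Multiset.mem_cons_self a s))
      (ih fun x hx => h x (Multiset.mem_cons_of_mem hx))
      (pow_nonneg hc _) (norm_nonneg a)

private lemma R_lower_bound (R : Polynomial ℤ) (hR : R.Monic)
    (hsmall : ∀ z : ℂ, Polynomial.aeval z R = 0 → ‖z‖ ≤ 1) :
    ∀ z : ℂ, 1 ≤ ‖z‖ →
      (‖z‖ - 1) ^ R.natDegree ≤ ‖Polynomial.aeval z R‖ := by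
  intro z hz
  set P : Polynomial ℂ := R.map (algebraMap ℤ ℂ) with hP
  have hPm : P.Monic := hR.map _
  have hsplits : Splits P := IsAlgClosed.splits P
  have hPeq := hsplits.eq_prod_roots_of_monic hPm
  have hcard : Multiset.card P.roots = R.natDegree := by
    rw [splits_iff_card_roots.mp hsplits, hP, hR.natDegree_map]
  have heval : Polynomial.aeval z R = P.eval z := by
    rw [aeval_def, eval_map]
  rw [heval]
  conv_rhs => rw [hPeq]
  rw [eval_multiset_prod, Multiset.map_map, ← normHom_apply (α := ℂ) (Multiset.prod _), map_multiset_prod, Multiset.map_map]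
  have : (P.roots.map (⇑(normHom (α := ℂ)) ∘ (eval z ∘ fun a => X - C a)))
      = (P.roots.map (fun a => z - a)).map (fun x => ‖x‖) := by
    rw [Multiset.map_map]
    apply Multiset.map_congr rfl
    intro a _; simp
  rw [this]
  have hc : ∀ x ∈ P.roots.map (fun a => z - a), ‖z‖ - 1 ≤ ‖x‖ := by
    intro x hx
    obtain ⟨a, ha, rfl⟩ := Multiset.mem_map.mp hx
    have haR : ‖a‖ ≤ 1 := by
      apply hsmall
      have := (mem_roots (hPm.ne_zero)).mp ha
      rwa [IsRoot, hP, eval_map, ← aeval_def] at this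
    calc ‖z‖ - 1 ≤ ‖z‖ - ‖a‖ := by linarith
    _ ≤ ‖z - a‖ := by
        have := norm_add_le (z - a) a
        simp only [sub_add_cancel] at this
        linarith
  have := pow_card_le_prod_abs (P.roots.map (fun a => z - a)) (‖z‖ - 1)
    (by linarith) hc
  simpa [hcard] using this


private lemma S_upper_bound (S : Polynomial ℤ) :
    ∃ C : ℝ, 0 ≤ C ∧ ∀ z : ℂ, 1 ≤ ‖z‖ →
      ‖Polynomial.aeval z S‖ ≤ C * ‖z‖ ^ S.natDegree := by
  refine ⟨∑ i ∈ Finset.range (S.natDegree + 1), ‖((S.coeff i : ℂ))‖,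
    Finset.sum_nonneg fun i _ => norm_nonneg _, ?_⟩
  intro z hz
  rw [aeval_def, eval₂_eq_sum_range, Finset.sum_mul]
  refine (norm_sum_le _ _).trans (Finset.sum_le_sum fun i hi => ?_)
  rw [norm_mul, norm_pow]
  refine mul_le_mul_of_nonneg_left ?_ (norm_nonneg _)
  exact pow_le_pow_right₀ hz (Nat.lt_succ_iff.mp (Finset.mem_range.mp hi))

theorem roots_small_tendsto_one (R S : Polynomial ℤ) (hR : R.Monic)
    (hsmall : ∀ z : ℂ, Polynomial.aeval z R = 0 → ‖z‖ ≤ 1) :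
    (∀ ε : ℝ, 0 < ε → ∃ N : ℕ, ∀ n : ℕ, N ≤ n →
      ∀ z : ℂ, Polynomial.aeval z (X ^ n * R + S) = 0 → ‖z‖ ≤ 1 + ε) ∧
    (∀ μ : ℕ → ℝ,
      (∃ N₀ : ℕ, ∀ n : ℕ, N₀ ≤ n →
        1 < μ n ∧ Polynomial.aeval (μ n) (X ^ n * R + S) = 0) →
      Tendsto μ atTop (nhds 1)) := by
  obtain ⟨C, hC0, hC⟩ := S_upper_bound S
  set d := R.natDegree with hd
  set m := S.natDegree with hm
  have part1 : ∀ ε : ℝ, 0 < ε → ∃ N : ℕ, ∀ n : ℕ, N ≤ n →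
      ∀ z : ℂ, Polynomial.aeval z (X ^ n * R + S) = 0 → ‖z‖ ≤ 1 + ε := by
    intro ε hε
    obtain ⟨k, hk⟩ := pow_unbounded_of_one_lt (C / ε ^ d) (by linarith : (1:ℝ) < 1 + ε)
    refine ⟨m + k, fun n hn z hz0 => ?_⟩
    by_contra hcon
    push_neg at hcon
    set A := ‖z‖ with hA
    have hA1 : (1:ℝ) ≤ A := by linarith
    have hAm : (0:ℝ) < A ^ m := pow_pos (by linarith) m
    have heq : A ^ n * ‖Polynomial.aeval z R‖
        = ‖Polynomial.aeval z S‖ := by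
      rw [map_add, map_mul, map_pow, aeval_X] at hz0
      have : Polynomial.aeval z S = -(z ^ n * Polynomial.aeval z R) := by
        linear_combination hz0
      rw [this, norm_neg, norm_mul, norm_pow]
    have h1 : ε ^ d ≤ (A - 1) ^ d := pow_le_pow_left₀ hε.le (by linarith) d
    have h2 : (1 + ε) ^ (n - m) ≤ A ^ (n - m) := pow_le_pow_left₀ (by linarith) hcon.le _
    have h3 : (1 + ε) ^ k ≤ (1 + ε) ^ (n - m) :=
      pow_le_pow_right₀ (by linarith) (by omega)
    have h4 : C < (1 + ε) ^ k * ε ^ d := (div_lt_iff₀ (pow_pos hε d)).mp hk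
    have h5 : A ^ (n - m) * A ^ m = A ^ n := by
      rw [← pow_add]; congr 1; omega
    have hRlb := R_lower_bound R hR hsmall z hA1
    have key : C * A ^ m < ‖Polynomial.aeval z S‖ := by
      calc C * A ^ m < ((1 + ε) ^ k * ε ^ d) * A ^ m := by
            exact mul_lt_mul_of_pos_right h4 hAm
        _ ≤ ((1 + ε) ^ (n - m) * ε ^ d) * A ^ m := by
            have hεd : (0:ℝ) ≤ ε ^ d := (pow_pos hε d).le
            gcongr
        _ ≤ (A ^ (n - m) * (A - 1) ^ d) * A ^ m := by
            have h1e : (0:ℝ) ≤ (1 + ε) ^ (n - m) := by positivity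
            have hεd : (0:ℝ) ≤ ε ^ d := (pow_pos hε d).le
            have hAm0 : (0:ℝ) ≤ A ^ m := hAm.le
            gcongr
        _ = A ^ n * (A - 1) ^ d := by rw [mul_right_comm, h5]
        _ ≤ A ^ n * ‖Polynomial.aeval z R‖ := by
            exact mul_le_mul_of_nonneg_left hRlb (by positivity)
        _ = ‖Polynomial.aeval z S‖ := heq
    exact absurd (hC z hA1) (not_le.mpr key)
  refine ⟨part1, ?_⟩
  intro μ ⟨N₀, hN₀⟩
  rw [Metric.tendsto_atTop]
  intro ε hε
  obtain ⟨N, hN⟩ := part1 (ε / 2) (half_pos hε)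
  refine ⟨max N N₀, fun n hn => ?_⟩
  obtain ⟨hμ1, hμroot⟩ := hN₀ n (le_of_max_le_right hn)
  have hzroot : Polynomial.aeval ((μ n : ℂ)) (X ^ n * R + S) = 0 := by
    rw [show ((μ n : ℂ)) = algebraMap ℝ ℂ (μ n) from rfl,
      aeval_algebraMap_apply, hμroot, map_zero]
  have habs := hN n (le_of_max_le_left hn) _ hzroot
  rw [Complex.norm_real, Real.norm_eq_abs, abs_of_pos (by linarith)] at habs
  rw [Real.dist_eq, abs_of_pos (by linarith)]
  linarith
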